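/- Let v, f : ℝ → ℝ → ℝ → ℝ and suppose there is a constant K ≥ 0 such that |f t x w₁ - f t x w₂| ≤ K·|w₁ - w₂| for all t, x, w₁, w₂, and f is continuous. Suppose w : ℝ → ℝ → ℝ is such that for every (t,x) the partial maps t' ↦ w t' x and x' ↦ w t x' are differentiable and w satisfies ∂w/∂t (t,x) + v t x (w t x) · ∂w/∂x (t,x) = f t x (w t x) everywhere, and t ↦ w t (ξ t) is continuous in t. Let ξ, ω : ℝ → ℝ be differentiable on [t₀, t₁] with ξ'(t) = v t (ξ t) (w t (ξ t)) and ω'(t) = f t (ξ t) (ω t) for all t ∈ [t₀, t₁], and suppose ω(t₀) = w t₀ (ξ t₀). Then w t (ξ t) = ω t for all t ∈ [t₀, t₁]. -/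

import Mathlib

open Set Metric intervalIntegral MeasureTheory Filter Topology

set_option maxHeartbeats 1000000



private lemma le_of_forall_add {x y : ℝ} (h : ∀ ρ : ℝ, 0 < ρ → x ≤ y + ρ) : x ≤ y := by
  by_contra hc
  push_neg at hc
  have := h ((x - y) / 2) (by linarith)
  linarith

/-- Step A: local two-sided Lipschitz control on a set `V` propagates across an
interval whose interior lies in `V`. -/
private lemma stepA {ψ : ℝ → ℝ} {a b ε : ℝ} (hε : 0 ≤ ε)
    (hψ : ContinuousOn ψ (Icc a b)) (V : Set ℝ)
    (hV : ∀ x ∈ V, ∃ r > 0, ∀ p ∈ Icc a b ∩ ball x r, ∀ q ∈ Icc a b ∩ ball x r,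
      |ψ p - ψ q| ≤ ε * |p - q|)
    {p q : ℝ} (hp : p ∈ Icc a b) (hq : q ∈ Icc a b) (hpq : p ≤ q)
    (hsub : Ioo p q ⊆ V) :
    |ψ q - ψ p| ≤ ε * (q - p) := by
  have hsubIcc : Icc p q ⊆ Icc a b := Icc_subset_Icc hp.1 hq.2
  apply le_of_forall_add
  intro ρ hρ
  set A : Set ℝ := Icc p q ∩ (fun t => |ψ t - ψ p| - ε * (t - p)) ⁻¹' Iic ρ with hAdef
  have hmemA : ∀ t, t ∈ A ↔ t ∈ Icc p q ∧ |ψ t - ψ p| - ε * (t - p) ≤ ρ := by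
    intro t; rfl
  have hpA : p ∈ A := by
    rw [hmemA]
    constructor
    · exact ⟨le_refl p, hpq⟩
    · simp only [sub_self, abs_zero, mul_zero]
      linarith
  have hAne : A.Nonempty := ⟨p, hpA⟩
  have hAbdd : BddAbove A := ⟨q, fun t ht => ((hmemA t).mp ht).1.2⟩
  have hψcont : ContinuousOn (fun t => |ψ t - ψ p| - ε * (t - p)) (Icc p q) := by
    apply ContinuousOn.sub
    · exact ((hψ.mono hsubIcc).sub continuousOn_const).abs
    · fun_prop
  have hAclosed : IsClosed A :=
    hψcont.preimage_isClosed_of_isClosed isClosed_Icc isClosed_Iic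
  set m := sSup A with hm
  have hmA : m ∈ A := hAclosed.csSup_mem hAne hAbdd
  have hmIcc : m ∈ Icc p q := ((hmemA m).mp hmA).1
  have hmest : |ψ m - ψ p| - ε * (m - p) ≤ ρ := ((hmemA m).mp hmA).2
  -- show m = q
  rcases eq_or_lt_of_le hmIcc.2 with hmq | hmq
  · rw [hmq] at hmest; linarith
  · exfalso
    -- find t ∈ A with m < t
    rcases eq_or_lt_of_le hmIcc.1 with hpm | hpm
    · -- m = p : use continuity at p
      have hcw : ContinuousWithinAt ψ (Icc a b) p := hψ p hp
      have hev : ∀ᶠ u in 𝓝[Icc a b] p, dist (ψ u) (ψ p) < ρ :=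
        Metric.tendsto_nhds.mp hcw ρ hρ
      rw [eventually_iff, Metric.mem_nhdsWithin_iff] at hev
      obtain ⟨η, hη, hsubη⟩ := hev
      have hpq' : p < q := by rw [hpm]; exact hmq
      set t := min q (p + η / 2) with htdef
      have hpt : p < t := lt_min hpq' (by linarith)
      have htq : t ≤ q := min_le_left _ _
      have htIcc : t ∈ Icc p q := ⟨le_of_lt hpt, htq⟩
      have htball : t ∈ ball p η := by
        rw [mem_ball, Real.dist_eq]
        have : t ≤ p + η / 2 := min_le_right _ _
        rw [abs_of_pos (by linarith)]
        linarith
      have htest : dist (ψ t) (ψ p) < ρ := hsubη ⟨htball, hsubIcc htIcc⟩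
      have htA : t ∈ A := by
        rw [hmemA]
        refine ⟨htIcc, ?_⟩
        rw [Real.dist_eq] at htest
        nlinarith [abs_nonneg (ψ t - ψ p)]
      have h9 : t ≤ sSup A := le_csSup hAbdd htA
      rw [← hm] at h9
      linarith
    · -- p < m < q : use hV at m
      have hmV : m ∈ V := hsub ⟨hpm, hmq⟩
      obtain ⟨r, hr, hloc⟩ := hV m hmV
      set t := min q (m + r / 2) with htdef
      have hmt : m < t := lt_min hmq (by linarith)
      have htq : t ≤ q := min_le_left _ _
      have htIcc : t ∈ Icc p q := ⟨le_trans hmIcc.1 (le_of_lt hmt), htq⟩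
      have htball : t ∈ ball m r := by
        rw [mem_ball, Real.dist_eq]
        have : t ≤ m + r / 2 := min_le_right _ _
        rw [abs_of_pos (by linarith)]
        linarith
      have hmball : m ∈ ball m r := by simpa using hr
      have hest : |ψ t - ψ m| ≤ ε * |t - m| :=
        hloc t ⟨hsubIcc htIcc, htball⟩ m ⟨hsubIcc hmIcc, hmball⟩
      have htA : t ∈ A := by
        rw [hmemA]
        refine ⟨htIcc, ?_⟩
        have h1 : |ψ t - ψ p| ≤ |ψ t - ψ m| + |ψ m - ψ p| := abs_sub_le _ _ _
        rw [abs_of_pos (by linarith : (0:ℝ) < t - m)] at hest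
        nlinarith
      have h9 : t ≤ sSup A := le_csSup hAbdd htA
      rw [← hm] at h9
      linarith

/-- The key covering lemma: a continuous function that is `ε`-Lipschitz on all
pairs that are fine for a pointwise gauge is `ε`-Lipschitz. Proved by Baire
category on the closed set of "non-locally-good" points. -/
private lemma gauge_lip {ψ : ℝ → ℝ} {a b ε : ℝ} (hε : 0 < ε)
    (hψ : ContinuousOn ψ (Icc a b)) (δ : ℝ → ℝ)
    (hδ : ∀ s ∈ Icc a b, 0 < δ s)
    (hpair : ∀ x ∈ Icc a b, ∀ y ∈ Icc a b,
      |x - y| ≤ δ x → |x - y| ≤ δ y → |ψ x - ψ y| ≤ ε * |x - y|) :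
    ∀ x ∈ Icc a b, ∀ y ∈ Icc a b, |ψ x - ψ y| ≤ ε * |x - y| := by
  classical
  set good : Set ℝ := {x | ∃ r > 0, ∀ p ∈ Icc a b ∩ ball x r, ∀ q ∈ Icc a b ∩ ball x r,
      |ψ p - ψ q| ≤ ε * |p - q|} with hgood
  have hVgood : ∀ x ∈ good, ∃ r > 0, ∀ p ∈ Icc a b ∩ ball x r, ∀ q ∈ Icc a b ∩ ball x r,
      |ψ p - ψ q| ≤ ε * |p - q| := fun x hx => hx
  have hgoodopen : IsOpen good := by
    rw [Metric.isOpen_iff]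
    rintro x ⟨r, hr, hx⟩
    refine ⟨r / 2, by linarith, ?_⟩
    intro y hy
    refine ⟨r / 2, by linarith, ?_⟩
    intro p hp q hq
    have hsub : Icc a b ∩ ball y (r / 2) ⊆ Icc a b ∩ ball x r := by
      rintro z ⟨hz1, hz2⟩
      refine ⟨hz1, ?_⟩
      rw [mem_ball] at *
      calc dist z x ≤ dist z y + dist y x := dist_triangle _ _ _
        _ < r / 2 + r / 2 := add_lt_add hz2 hy
        _ = r := by ring
    exact hx p (hsub hp) q (hsub hq)
  -- Z is the bad set
  set Z : Set ℝ := Icc a b ∩ goodᶜ with hZdef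
  have hZclosed : IsClosed Z := isClosed_Icc.inter hgoodopen.isClosed_compl
  have hZIcc : Z ⊆ Icc a b := inter_subset_left
  -- main ordered estimate assuming we know `Ioo p q ⊆ good`-type facts come from Z = ∅
  have hZempty : Z = ∅ := by
    by_contra hne
    rw [← Ne, ← nonempty_iff_ne_empty] at hne
    haveI : Nonempty Z := hne.to_subtype
    haveI : CompleteSpace Z := hZclosed.completeSpace_coe
    set C : ℕ → Set ℝ := fun n => {s | s ∈ Icc a b ∧ 1 / (n + 1 : ℝ) ≤ δ s} with hC
    have hcover : (⋃ n : ℕ, (Subtype.val ⁻¹' closure (C n ∩ Z) : Set Z)) = univ := by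
      rw [eq_univ_iff_forall]
      rintro ⟨z, hz⟩
      have hzIcc := hZIcc hz
      obtain ⟨n, hn⟩ := exists_nat_one_div_lt (hδ z hzIcc)
      refine mem_iUnion.mpr ⟨n, ?_⟩
      exact subset_closure ⟨⟨hzIcc, by push_cast; linarith⟩, hz⟩
    have hclosed : ∀ n : ℕ, IsClosed (Subtype.val ⁻¹' closure (C n ∩ Z) : Set Z) :=
      fun n => isClosed_closure.preimage continuous_subtype_val
    obtain ⟨n, hn⟩ := nonempty_interior_of_iUnion_of_closed hclosed hcover
    obtain ⟨x, hx⟩ := hn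
    rw [mem_interior_iff_mem_nhds, Metric.mem_nhds_iff] at hx
    obtain ⟨r₀, hr₀, hball₀⟩ := hx
    have hball : ∀ z ∈ Z, dist z (x : ℝ) < r₀ → z ∈ closure (C n ∩ Z) := by
      intro z hz hd
      have : (⟨z, hz⟩ : Z) ∈ ball x r₀ := by
        rw [mem_ball, Subtype.dist_eq]; exact hd
      exact hball₀ this
    set z₀ := (x : ℝ) with hz₀def
    have hz₀Z : z₀ ∈ Z := x.2
    set r : ℝ := min r₀ (1 / (4 * (n + 1 : ℝ))) with hrdef
    have hrpos : 0 < r := lt_min hr₀ (by positivity)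
    have hrn : r ≤ 1 / (4 * (n + 1 : ℝ)) := min_le_right _ _
    have hrr₀ : r ≤ r₀ := min_le_left _ _
    -- ordered estimate inside the ball
    have hord : ∀ p ∈ Icc a b ∩ ball z₀ r, ∀ q ∈ Icc a b ∩ ball z₀ r, p ≤ q →
        |ψ q - ψ p| ≤ ε * (q - p) := by
      rintro p ⟨hpI, hpB⟩ q ⟨hqI, hqB⟩ hpq
      have hIccpq : Icc p q ⊆ Icc a b := Icc_subset_Icc hpI.1 hqI.2
      have hIccball : Icc p q ⊆ ball z₀ r := by
        intro u hu
        rw [mem_ball, Real.dist_eq, abs_lt]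
        rw [mem_ball, Real.dist_eq, abs_lt] at hpB hqB
        exact ⟨by linarith [hu.1], by linarith [hu.2]⟩
      by_cases hS : (Z ∩ Icc p q).Nonempty
      · set x' := sInf (Z ∩ Icc p q) with hx'def
        set y' := sSup (Z ∩ Icc p q) with hy'def
        have hScl : IsClosed (Z ∩ Icc p q) := hZclosed.inter isClosed_Icc
        have hSbddA : BddAbove (Z ∩ Icc p q) := ⟨q, fun t ht => ht.2.2⟩
        have hSbddB : BddBelow (Z ∩ Icc p q) := ⟨p, fun t ht => ht.2.1⟩
        have hx'S : x' ∈ Z ∩ Icc p q := hScl.csInf_mem hS hSbddB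
        have hy'S : y' ∈ Z ∩ Icc p q := hScl.csSup_mem hS hSbddA
        have hx'y' : x' ≤ y' := csInf_le_csSup hS hSbddB hSbddA
        -- left piece
        have hleft : |ψ x' - ψ p| ≤ ε * (x' - p) := by
          apply stepA (le_of_lt hε) hψ good hVgood hpI (hIccpq hx'S.2) hx'S.2.1
          intro u hu
          by_contra hu'
          have huZ : u ∈ Z := ⟨hIccpq ⟨le_of_lt hu.1, le_trans (le_of_lt hu.2) hx'S.2.2⟩, hu'⟩
          have : x' ≤ u := csInf_le hSbddB ⟨huZ, ⟨le_of_lt hu.1, le_trans (le_of_lt hu.2) hx'S.2.2⟩⟩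
          linarith [hu.2]
        -- right piece
        have hright : |ψ q - ψ y'| ≤ ε * (q - y') := by
          apply stepA (le_of_lt hε) hψ good hVgood (hIccpq hy'S.2) hqI hy'S.2.2
          intro u hu
          by_contra hu'
          have huZ : u ∈ Z := ⟨hIccpq ⟨le_trans hy'S.2.1 (le_of_lt hu.1), le_of_lt hu.2⟩, hu'⟩
          have : u ≤ y' := le_csSup hSbddA ⟨huZ, ⟨le_trans hy'S.2.1 (le_of_lt hu.1), le_of_lt hu.2⟩⟩
          linarith [hu.1]
        -- middle piece via closure of C n ∩ Z
        have hmid : |ψ y' - ψ x'| ≤ ε * (y' - x') := by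
          apply le_of_forall_add
          intro σ hσ
          have hx'cl : x' ∈ closure (C n ∩ Z) := by
            apply hball x' hx'S.1
            have := hIccball hx'S.2
            rw [mem_ball] at this
            linarith [this, hrr₀]
          have hy'cl : y' ∈ closure (C n ∩ Z) := by
            apply hball y' hy'S.1
            have := hIccball hy'S.2
            rw [mem_ball] at this
            linarith [this, hrr₀]
          have hcx : ContinuousWithinAt ψ (Icc a b) x' := hψ x' (hIccpq hx'S.2)
          have hcy : ContinuousWithinAt ψ (Icc a b) y' := hψ y' (hIccpq hy'S.2)
          have hevx : ∀ᶠ u in 𝓝[Icc a b] x', dist (ψ u) (ψ x') < σ / 4 :=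
            Metric.tendsto_nhds.mp hcx _ (by linarith)
          have hevy : ∀ᶠ u in 𝓝[Icc a b] y', dist (ψ u) (ψ y') < σ / 4 :=
            Metric.tendsto_nhds.mp hcy _ (by linarith)
          rw [eventually_iff, Metric.mem_nhdsWithin_iff] at hevx
          rw [eventually_iff, Metric.mem_nhdsWithin_iff] at hevy
          obtain ⟨η₁, hη₁, hsubx⟩ := hevx
          obtain ⟨η₂, hη₂, hsuby⟩ := hevy
          set ν : ℝ := min (min η₁ η₂) (min (1 / (8 * ((n:ℝ) + 1))) (σ / (4 * (ε + 1)))) with hν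
          have hνpos : 0 < ν := by
            apply lt_min (lt_min hη₁ hη₂)
            apply lt_min (by positivity) (by positivity)
          obtain ⟨c, hcmem, hcd⟩ := Metric.mem_closure_iff.mp hx'cl ν hνpos
          obtain ⟨c', hc'mem, hc'd⟩ := Metric.mem_closure_iff.mp hy'cl ν hνpos
          have hcd1 : |c - x'| < ν := by rw [Real.dist_eq, abs_sub_comm] at hcd; exact hcd
          have hc'd1 : |c' - y'| < ν := by rw [Real.dist_eq, abs_sub_comm] at hc'd; exact hc'd
          have hcIcc : c ∈ Icc a b := hcmem.1.1
          have hc'Icc : c' ∈ Icc a b := hc'mem.1.1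
          have hδc : 1 / ((n:ℝ) + 1) ≤ δ c := hcmem.1.2
          have hδc' : 1 / ((n:ℝ) + 1) ≤ δ c' := hc'mem.1.2
          have hνb : ν ≤ 1 / (8 * ((n:ℝ) + 1)) := le_trans (min_le_right _ _) (min_le_left _ _)
          have hνσ : ν ≤ σ / (4 * (ε + 1)) := le_trans (min_le_right _ _) (min_le_right _ _)
          have hνη₁ : ν ≤ η₁ := le_trans (min_le_left _ _) (min_le_left _ _)
          have hνη₂ : ν ≤ η₂ := le_trans (min_le_left _ _) (min_le_right _ _)
          have hqp : q - p < 2 * r := by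
            rw [mem_ball, Real.dist_eq, abs_lt] at hpB hqB
            linarith
          have habs1 : |c - x'| ≤ ν := le_of_lt hcd1
          have habs2 : |c' - y'| ≤ ν := le_of_lt hc'd1
          have hax1 := abs_le.mp habs1
          have hax2 := abs_le.mp habs2
          have hyx : y' - x' ≤ q - p := by
            have := hx'S.2.1; have := hy'S.2.2; linarith
          have hccbound : |c - c'| ≤ (y' - x') + 2 * ν := by
            have e1 : c - c' = (c - x') - (c' - y') + (x' - y') := by ring
            rw [abs_le]
            constructor
            · linarith [hax1.1, hax1.2, hax2.1, hax2.2, hx'y']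
            · linarith [hax1.1, hax1.2, hax2.1, hax2.2, hx'y']
          have hcc' : |c - c'| ≤ 1 / ((n:ℝ) + 1) := by
            have h4 : (0:ℝ) < (n:ℝ) + 1 := by positivity
            have e8 : 1 / (8 * ((n:ℝ) + 1)) = (1 / ((n:ℝ) + 1)) / 8 := by
              field_simp
            have e4 : 1 / (4 * ((n:ℝ) + 1)) = (1 / ((n:ℝ) + 1)) / 4 := by
              field_simp
            have hr4 : r ≤ (1 / ((n:ℝ) + 1)) / 4 := by rw [← e4]; exact hrn
            have hν8 : ν ≤ (1 / ((n:ℝ) + 1)) / 8 := by rw [← e8]; exact hνb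
            calc |c - c'| ≤ (y' - x') + 2 * ν := hccbound
              _ ≤ (q - p) + 2 * ν := by linarith
              _ ≤ 2 * r + 2 * ν := by linarith
              _ ≤ 1 / ((n:ℝ) + 1) := by linarith
          have hpairest : |ψ c - ψ c'| ≤ ε * |c - c'| :=
            hpair c hcIcc c' hc'Icc (le_trans hcc' hδc) (le_trans hcc' hδc')
          have hψcx : |ψ c - ψ x'| < σ / 4 := by
            have hmem : c ∈ ball x' η₁ ∩ Icc a b := by
              refine ⟨?_, hcIcc⟩
              rw [mem_ball, Real.dist_eq]
              linarith
            have := hsubx hmem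
            simp only [mem_setOf_eq, Real.dist_eq] at this
            exact this
          have hψcy : |ψ c' - ψ y'| < σ / 4 := by
            have hmem : c' ∈ ball y' η₂ ∩ Icc a b := by
              refine ⟨?_, hc'Icc⟩
              rw [mem_ball, Real.dist_eq]
              linarith
            have := hsuby hmem
            simp only [mem_setOf_eq, Real.dist_eq] at this
            exact this
          have htri : |ψ y' - ψ x'| ≤ |ψ c' - ψ y'| + |ψ c - ψ c'| + |ψ c - ψ x'| := by
            have h5 := abs_sub_le (ψ y') (ψ c') (ψ c)
            have h6 := abs_sub_le (ψ y') (ψ c) (ψ x')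
            have h7 := abs_sub_comm (ψ y') (ψ c')
            have h8 := abs_sub_comm (ψ c') (ψ c)
            have h9 := abs_sub_comm (ψ c) (ψ c')
            calc |ψ y' - ψ x'| ≤ |ψ y' - ψ c| + |ψ c - ψ x'| := abs_sub_le _ _ _
              _ ≤ (|ψ y' - ψ c'| + |ψ c' - ψ c|) + |ψ c - ψ x'| := by
                  linarith [abs_sub_le (ψ y') (ψ c') (ψ c)]
              _ = |ψ c' - ψ y'| + |ψ c - ψ c'| + |ψ c - ψ x'| := by
                  rw [abs_sub_comm (ψ y') (ψ c'), abs_sub_comm (ψ c') (ψ c)]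
          have hεν : ε * (2 * ν) ≤ σ / 2 := by
            have hpos : (0:ℝ) < ε + 1 := by linarith
            have h1 : ε * ν ≤ ε * (σ / (4 * (ε + 1))) :=
              mul_le_mul_of_nonneg_left hνσ (le_of_lt hε)
            have e : ε * (σ / (4 * (ε + 1))) = σ * (ε / (ε + 1)) / 4 := by
              field_simp
            have hfr : ε / (ε + 1) ≤ 1 := by
              rw [div_le_one hpos]; linarith
            have h2 : σ * (ε / (ε + 1)) / 4 ≤ σ / 4 := by
              have : σ * (ε / (ε + 1)) ≤ σ * 1 := by
                apply mul_le_mul_of_nonneg_left hfr (le_of_lt hσ)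
              linarith
            have h3 : ε * ν ≤ σ / 4 := by rw [e] at h1; linarith
            linarith
          calc |ψ y' - ψ x'| ≤ |ψ c' - ψ y'| + |ψ c - ψ c'| + |ψ c - ψ x'| := htri
            _ ≤ σ / 4 + ε * |c - c'| + σ / 4 := by linarith
            _ ≤ σ / 4 + (ε * (y' - x') + ε * (2 * ν)) + σ / 4 := by
                have := mul_le_mul_of_nonneg_left hccbound (le_of_lt hε)
                linarith
            _ ≤ ε * (y' - x') + σ := by linarith
        -- combine
        have h1 : |ψ q - ψ p| ≤ |ψ q - ψ y'| + |ψ y' - ψ x'| + |ψ x' - ψ p| := by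
          have h5 := abs_sub_le (ψ q) (ψ y') (ψ x')
          have h6 := abs_sub_le (ψ q) (ψ x') (ψ p)
          linarith
        calc |ψ q - ψ p| ≤ |ψ q - ψ y'| + |ψ y' - ψ x'| + |ψ x' - ψ p| := h1
          _ ≤ ε * (q - y') + ε * (y' - x') + ε * (x' - p) := by linarith
          _ = ε * (q - p) := by ring
      · -- no bad points between p and q
        apply stepA (le_of_lt hε) hψ good hVgood hpI hqI hpq
        intro u hu
        by_contra hu'
        exact hS ⟨u, ⟨hIccpq ⟨le_of_lt hu.1, le_of_lt hu.2⟩, hu'⟩, ⟨le_of_lt hu.1, le_of_lt hu.2⟩⟩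
    -- z₀ is good: contradiction
    have hz₀good : z₀ ∈ good := by
      refine ⟨r, hrpos, ?_⟩
      intro p hp q hq
      rcases le_total p q with h | h
      · rw [abs_sub_comm (ψ p) (ψ q), abs_sub_comm p q,
          abs_of_nonneg (by linarith : (0:ℝ) ≤ q - p)]
        exact hord p hp q hq h
      · rw [abs_of_nonneg (by linarith : (0:ℝ) ≤ p - q)]
        exact hord q hq p hp h
    exact hz₀Z.2 hz₀good
  -- now Z is empty: conclude
  have hallgood : ∀ x ∈ Icc a b, x ∈ good := by
    intro x hx
    by_contra hx'
    have : x ∈ Z := ⟨hx, hx'⟩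
    rw [hZempty] at this
    exact this
  have hord : ∀ p ∈ Icc a b, ∀ q ∈ Icc a b, p ≤ q → |ψ q - ψ p| ≤ ε * (q - p) := by
    intro p hp q hq hpq
    apply stepA (le_of_lt hε) hψ good hVgood hp hq hpq
    intro u hu
    exact hallgood u (Icc_subset_Icc hp.1 hq.2 ⟨le_of_lt hu.1, le_of_lt hu.2⟩)
  intro x hx y hy
  rcases le_total x y with h | h
  · rw [abs_sub_comm (ψ x) (ψ y), abs_sub_comm x y,
      abs_of_nonneg (by linarith : (0:ℝ) ≤ y - x)]
    exact hord x hx y hy h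
  · rw [abs_of_nonneg (by linarith : (0:ℝ) ≤ x - y)]
    exact hord y hy x hx h



private lemma tri_ineq (u v : ℝ) : |u - v| ≤ |u| + |v| := abs_sub u v

private lemma hasDerivAt_eps {f : ℝ → ℝ} {s L : ℝ} (h : HasDerivAt f L s) {ε : ℝ} (hε : 0 < ε) :
    ∃ d > 0, ∀ u, |u - s| ≤ d → |f u - f s - (u - s) * L| ≤ ε * |u - s| := by
  have h1 := hasDerivAt_iff_isLittleO.mp h
  have h2 := (Asymptotics.isLittleO_iff.mp h1) hε
  rw [eventually_iff, Metric.mem_nhds_iff] at h2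
  obtain ⟨d, hd, hsub⟩ := h2
  refine ⟨d / 2, by linarith, ?_⟩
  intro u hud
  have hmem : u ∈ ball s d := by rw [mem_ball, Real.dist_eq]; linarith
  have h3 := hsub hmem
  simp only [mem_setOf_eq, Real.norm_eq_abs, smul_eq_mul] at h3
  exact h3

private lemma hasDerivWithinAt_eps {f : ℝ → ℝ} {s L : ℝ} {S : Set ℝ}
    (h : HasDerivWithinAt f L S s) {ε : ℝ} (hε : 0 < ε) :
    ∃ d > 0, ∀ u ∈ S, |u - s| ≤ d → |f u - f s - (u - s) * L| ≤ ε * |u - s| := by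
  have h1 := hasDerivWithinAt_iff_isLittleO.mp h
  have h2 := (Asymptotics.isLittleO_iff.mp h1) hε
  rw [eventually_iff, Metric.mem_nhdsWithin_iff] at h2
  obtain ⟨d, hd, hsub⟩ := h2
  refine ⟨d / 2, by linarith, ?_⟩
  intro u hu hud
  have hmem : u ∈ ball s d ∩ S := ⟨by rw [mem_ball, Real.dist_eq]; linarith, hu⟩
  have h3 := hsub hmem
  simp only [mem_setOf_eq, Real.norm_eq_abs, smul_eq_mul] at h3
  exact h3

/-- If `P` is a two-parameter family with partial derivatives `T` (first slot) and `X`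
(second slot) at diagonal points, `T + X = F` with `F` continuous, and the diagonal
trace `g` is continuous, then the trace satisfies the integral equation `g = g a + ∫ F`. -/
private lemma integral_identity {a b : ℝ} (hab : a ≤ b) (P : ℝ → ℝ → ℝ)
    (T X F : ℝ → ℝ)
    (hV : ∀ s ∈ Icc a b, HasDerivAt (fun u => P u s) (T s) s)
    (hH : ∀ s ∈ Icc a b, HasDerivWithinAt (fun u => P s u) (X s) (Icc a b) s)
    (hTX : ∀ s ∈ Icc a b, T s + X s = F s)
    (hgc : ContinuousOn (fun s => P s s) (Icc a b))
    (hFc : ContinuousOn F (Icc a b)) :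
    ∀ s ∈ Icc a b, P s s = P a a + ∫ u in a..s, F u := by
  have hFint : ∀ p ∈ Icc a b, ∀ q ∈ Icc a b, IntervalIntegrable F volume p q := by
    intro p hp q hq
    apply ContinuousOn.intervalIntegrable
    apply hFc.mono
    apply uIcc_subset_Icc hp hq
  have hprim : ContinuousOn (fun x => ∫ u in a..x, F u) (Icc a b) := by
    have h1 : IntegrableOn F (uIcc a b) volume := by
      rw [uIcc_of_le hab]
      exact hFc.integrableOn_Icc
    have h2 := intervalIntegral.continuousOn_primitive_interval (f := F) (μ := volume)
      (a := a) (b := b) h1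
    rwa [uIcc_of_le hab] at h2
  have hψc : ContinuousOn (fun s => P s s - ∫ u in a..s, F u) (Icc a b) := hgc.sub hprim
  have main : ∀ ε, 0 < ε → ∀ x ∈ Icc a b, ∀ y ∈ Icc a b,
      |(P x x - ∫ u in a..x, F u) - (P y y - ∫ u in a..y, F u)| ≤ ε * |x - y| := by
    intro ε hε
    have hε8 : 0 < ε / 8 := by linarith
    -- uniform continuity of F
    obtain ⟨η, hη, hunif⟩ :=
      Metric.uniformContinuousOn_iff.mp (isCompact_Icc.uniformContinuousOn_of_continuous hFc) (ε / 8) hε8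
    -- pointwise gauge from differentiability
    have hgauge : ∀ s : ℝ, ∃ d, 0 < d ∧ (s ∈ Icc a b →
        ((∀ u, |u - s| ≤ d → |P u s - P s s - (u - s) * T s| ≤ ε / 8 * |u - s|) ∧
         (∀ u ∈ Icc a b, |u - s| ≤ d → |P s u - P s s - (u - s) * X s| ≤ ε / 8 * |u - s|))) := by
      intro s
      by_cases hs : s ∈ Icc a b
      · obtain ⟨d₁, hd₁, h1⟩ := hasDerivAt_eps (hV s hs) hε8
        obtain ⟨d₂, hd₂, h2⟩ := hasDerivWithinAt_eps (hH s hs) hε8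
        refine ⟨min d₁ d₂, lt_min hd₁ hd₂, fun _ => ⟨?_, ?_⟩⟩
        · exact fun u hu => h1 u (le_trans hu (min_le_left _ _))
        · exact fun u hu hud => h2 u hu (le_trans hud (min_le_right _ _))
      · exact ⟨1, one_pos, fun h => absurd h hs⟩
    choose d hdpos hdprop using hgauge
    apply gauge_lip hε hψc (fun s => min (d s) (η / 2))
      (fun s _ => lt_min (hdpos s) (by linarith))
    intro x hx y hy hfx hfy
    have hxy_dx : |x - y| ≤ d x := le_trans hfx (min_le_left _ _)
    have hxy_dy' : |y - x| ≤ d y := by rw [abs_sub_comm]; exact le_trans hfy (min_le_left _ _)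
    have hxy_η : |x - y| ≤ η / 2 := le_trans hfx (min_le_right _ _)
    obtain ⟨hVx, hHx⟩ := hdprop x hx
    obtain ⟨hVy, hHy⟩ := hdprop y hy
    have e1 : |P y x - P x x - (y - x) * T x| ≤ ε / 8 * |y - x| :=
      hVx y (by rw [abs_sub_comm]; exact hxy_dx)
    have e2 : |P x y - P x x - (y - x) * X x| ≤ ε / 8 * |y - x| :=
      hHx y hy (by rw [abs_sub_comm]; exact hxy_dx)
    have e3 : |P x y - P y y - (x - y) * T y| ≤ ε / 8 * |x - y| :=
      hVy x (by rw [abs_sub_comm]; exact hxy_dy')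
    have e4 : |P y x - P y y - (x - y) * X y| ≤ ε / 8 * |x - y| :=
      hHy x hx (by rw [abs_sub_comm]; exact hxy_dy')
    have habsc : |y - x| = |x - y| := abs_sub_comm _ _
    rw [habsc] at e1 e2
    -- combination estimates
    have hA : |(P y y - P x x) + (x - y) * (T x + X y)| ≤ ε / 4 * |x - y| := by
      have hid : (P y y - P x x) + (x - y) * (T x + X y) =
          (P y x - P x x - (y - x) * T x) - (P y x - P y y - (x - y) * X y) := by ring
      rw [hid]
      calc |(P y x - P x x - (y - x) * T x) - (P y x - P y y - (x - y) * X y)|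
          ≤ |P y x - P x x - (y - x) * T x| + |P y x - P y y - (x - y) * X y| := tri_ineq _ _
        _ ≤ ε / 4 * |x - y| := by linarith
    have hB : |(P x x - P y y) - (x - y) * (T y + X x)| ≤ ε / 4 * |x - y| := by
      have hid : (P x x - P y y) - (x - y) * (T y + X x) =
          (P x y - P y y - (x - y) * T y) - (P x y - P x x - (y - x) * X x) := by ring
      rw [hid]
      calc |(P x y - P y y - (x - y) * T y) - (P x y - P x x - (y - x) * X x)|
          ≤ |P x y - P y y - (x - y) * T y| + |P x y - P x x - (y - x) * X x| := tri_ineq _ _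
        _ ≤ ε / 4 * |x - y| := by linarith
    have hC : |2 * (P x x - P y y) - (x - y) * (F x + F y)| ≤ ε / 2 * |x - y| := by
      have hFx' : F x = T x + X x := (hTX x hx).symm
      have hFy' : F y = T y + X y := (hTX y hy).symm
      have hid : 2 * (P x x - P y y) - (x - y) * (F x + F y) =
          ((P x x - P y y) - (x - y) * (T y + X x)) -
            ((P y y - P x x) + (x - y) * (T x + X y)) := by
        rw [hFx', hFy']; ring
      rw [hid]
      calc |((P x x - P y y) - (x - y) * (T y + X x)) -
            ((P y y - P x x) + (x - y) * (T x + X y))|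
          ≤ |(P x x - P y y) - (x - y) * (T y + X x)| +
            |(P y y - P x x) + (x - y) * (T x + X y)| := tri_ineq _ _
        _ ≤ ε / 2 * |x - y| := by linarith
    -- integral estimates
    have hIdiff : (∫ u in a..x, F u) - ∫ u in a..y, F u = ∫ u in y..x, F u :=
      integral_interval_sub_left (hFint a (left_mem_Icc.mpr hab) x hx)
        (hFint a (left_mem_Icc.mpr hab) y hy)
    have hIest : |(∫ u in y..x, F u) - (x - y) * F y| ≤ ε / 8 * |x - y| := by
      have hsub : (∫ u in y..x, F u) - (x - y) * F y = ∫ u in y..x, (F u - F y) := by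
        rw [intervalIntegral.integral_sub (hFint y hy x hx) (intervalIntegrable_const)]
        rw [intervalIntegral.integral_const]
        simp [smul_eq_mul]
      rw [hsub]
      have hbound : ∀ u ∈ Set.uIoc y x, ‖F u - F y‖ ≤ ε / 8 := by
        intro u hu
        have huIcc : u ∈ Icc a b := by
          rcases le_total y x with h | h
          · rw [uIoc_of_le h] at hu
            exact ⟨le_trans hy.1 (le_of_lt hu.1), le_trans hu.2 hx.2⟩
          · rw [uIoc_of_ge h] at hu
            exact ⟨le_trans hx.1 (le_of_lt hu.1), le_trans hu.2 hy.2⟩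
        have huy : dist u y < η := by
          rw [Real.dist_eq]
          have : |u - y| ≤ |x - y| := by
            rcases le_total y x with h | h
            · rw [uIoc_of_le h] at hu
              rw [abs_of_nonneg (by linarith [hu.1.le] : (0:ℝ) ≤ u - y),
                abs_of_nonneg (by linarith : (0:ℝ) ≤ x - y)]
              linarith [hu.2]
            · rw [uIoc_of_ge h] at hu
              rw [abs_of_nonpos (by linarith [hu.2] : u - y ≤ 0),
                abs_of_nonpos (by linarith : x - y ≤ 0)]
              linarith [hu.1.le]
          linarith
        have := hunif u huIcc y hy huy
        rw [Real.dist_eq] at this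
        rw [Real.norm_eq_abs]
        linarith
      have hres := intervalIntegral.norm_integral_le_of_norm_le_const (C := ε / 8) hbound
      rwa [Real.norm_eq_abs] at hres
    have hD : |2 * ((∫ u in a..x, F u) - ∫ u in a..y, F u) - (x - y) * (F x + F y)| ≤
        (3 * ε / 8) * |x - y| := by
      rw [hIdiff]
      have hFxy : |F x - F y| ≤ ε / 8 := by
        have hxy' : dist x y < η := by rw [Real.dist_eq]; linarith
        have := hunif x hx y hy hxy'
        rw [Real.dist_eq] at this
        linarith
      have hid : 2 * (∫ u in y..x, F u) - (x - y) * (F x + F y) =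
          2 * ((∫ u in y..x, F u) - (x - y) * F y) - (x - y) * (F x - F y) := by ring
      rw [hid]
      have h1 : |2 * ((∫ u in y..x, F u) - (x - y) * F y)| ≤ 2 * (ε / 8 * |x - y|) := by
        rw [abs_mul]
        simp only [abs_two]
        linarith [hIest]
      have h2 : |(x - y) * (F x - F y)| ≤ |x - y| * (ε / 8) := by
        rw [abs_mul]
        apply mul_le_mul_of_nonneg_left hFxy (abs_nonneg _)
      calc |2 * ((∫ u in y..x, F u) - (x - y) * F y) - (x - y) * (F x - F y)|
          ≤ |2 * ((∫ u in y..x, F u) - (x - y) * F y)| + |(x - y) * (F x - F y)| := tri_ineq _ _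
        _ ≤ (3 * ε / 8) * |x - y| := by linarith
    -- combine everything
    have hfinal : |2 * ((P x x - ∫ u in a..x, F u) - (P y y - ∫ u in a..y, F u))| ≤
        (7 * ε / 8) * |x - y| := by
      have hid : 2 * ((P x x - ∫ u in a..x, F u) - (P y y - ∫ u in a..y, F u)) =
          (2 * (P x x - P y y) - (x - y) * (F x + F y)) -
            (2 * ((∫ u in a..x, F u) - ∫ u in a..y, F u) - (x - y) * (F x + F y)) := by ring
      rw [hid]
      calc |(2 * (P x x - P y y) - (x - y) * (F x + F y)) -
            (2 * ((∫ u in a..x, F u) - ∫ u in a..y, F u) - (x - y) * (F x + F y))|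
          ≤ |2 * (P x x - P y y) - (x - y) * (F x + F y)| +
            |2 * ((∫ u in a..x, F u) - ∫ u in a..y, F u) - (x - y) * (F x + F y)| := tri_ineq _ _
        _ ≤ (7 * ε / 8) * |x - y| := by linarith
    have h2abs : |2 * ((P x x - ∫ u in a..x, F u) - (P y y - ∫ u in a..y, F u))| =
        2 * |(P x x - ∫ u in a..x, F u) - (P y y - ∫ u in a..y, F u)| := by
      rw [abs_mul, abs_two]
    rw [h2abs] at hfinal
    nlinarith [abs_nonneg (x - y)]
  -- conclude equality from the ∀ ε estimate
  intro s hs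
  have ht₀ : a ∈ Icc a b := left_mem_Icc.mpr hab
  have hzero : (∫ u in a..a, F u) = 0 := intervalIntegral.integral_same
  have hlim : ∀ ε, 0 < ε → |(P s s - ∫ u in a..s, F u) - P a a| ≤ ε * |s - a| := by
    intro ε hε
    have := main ε hε s hs a ht₀
    rwa [hzero, sub_zero] at this
  by_contra hne
  have hne' : (P s s - ∫ u in a..s, F u) - P a a ≠ 0 := by
    intro h
    exact hne (by linarith [sub_eq_zero.mp h])
  have habs : 0 < |(P s s - ∫ u in a..s, F u) - P a a| := abs_pos.mpr hne'
  set Q := |(P s s - ∫ u in a..s, F u) - P a a| with hQ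
  have hd1 : Q ≤ (Q / (2 * (|s - a| + 1))) * |s - a| := hlim _ (by positivity)
  have hd2 : (Q / (2 * (|s - a| + 1))) * |s - a| < Q := by
    rw [div_mul_eq_mul_div, div_lt_iff₀ (by positivity)]
    nlinarith [abs_nonneg (s - a)]
  linarith

/-- Representation formula of the method of characteristics: the solution of the
quasilinear PDE `w_t + v(t,x,w) w_x = f(t,x,w)` coincides along a characteristic
curve `ξ` with the solution `ω` of the characteristic ODE `ω' = f(t, ξ, ω)`,
provided the initial value of `ω` matches the PDE solution and `f` is Lipschitz
in its last argument. -/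
theorem method_of_characteristics_representation
    (v f : ℝ → ℝ → ℝ → ℝ) (K : ℝ) (hK : 0 ≤ K)
    (hlip : ∀ t x w₁ w₂ : ℝ, |f t x w₁ - f t x w₂| ≤ K * |w₁ - w₂|)
    (hfc : Continuous fun p : ℝ × ℝ × ℝ => f p.1 p.2.1 p.2.2)
    (w : ℝ → ℝ → ℝ)
    (hwt : ∀ t x : ℝ, DifferentiableAt ℝ (fun t' => w t' x) t)
    (hwx : ∀ t x : ℝ, DifferentiableAt ℝ (fun x' => w t x') x)
    (hpde : ∀ t x : ℝ,
      deriv (fun t' => w t' x) t + v t x (w t x) * deriv (fun x' => w t x') x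
        = f t x (w t x))
    (t₀ t₁ : ℝ) (ht : t₀ ≤ t₁) (ξ ω : ℝ → ℝ)
    (hwξc : Continuous fun t => w t (ξ t))
    (hξ : ∀ t ∈ Set.Icc t₀ t₁,
      HasDerivWithinAt ξ (v t (ξ t) (w t (ξ t))) (Set.Icc t₀ t₁) t)
    (hω : ∀ t ∈ Set.Icc t₀ t₁,
      HasDerivWithinAt ω (f t (ξ t) (ω t)) (Set.Icc t₀ t₁) t)
    (hinit : ω t₀ = w t₀ (ξ t₀)) :
    ∀ t ∈ Set.Icc t₀ t₁, w t (ξ t) = ω t := by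
  have hξcont : ContinuousOn ξ (Set.Icc t₀ t₁) := fun s hs => (hξ s hs).continuousWithinAt
  have hωcont : ContinuousOn ω (Set.Icc t₀ t₁) := fun s hs => (hω s hs).continuousWithinAt
  have hgcont : ContinuousOn (fun s => w s (ξ s)) (Set.Icc t₀ t₁) := hwξc.continuousOn
  have hFcont : ContinuousOn (fun s => f s (ξ s) (w s (ξ s))) (Set.Icc t₀ t₁) := by
    have h1 : ContinuousOn (fun s => (s, ξ s, w s (ξ s))) (Set.Icc t₀ t₁) :=
      continuousOn_id.prodMk (hξcont.prodMk hgcont)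
    exact hfc.comp_continuousOn h1
  have hFωcont : ContinuousOn (fun s => f s (ξ s) (ω s)) (Set.Icc t₀ t₁) := by
    have h1 : ContinuousOn (fun s => (s, ξ s, ω s)) (Set.Icc t₀ t₁) :=
      continuousOn_id.prodMk (hξcont.prodMk hωcont)
    exact hfc.comp_continuousOn h1
  -- integral identity for the composite along the characteristic
  have hgid : ∀ s ∈ Set.Icc t₀ t₁,
      w s (ξ s) = w t₀ (ξ t₀) + ∫ u in t₀..s, f u (ξ u) (w u (ξ u)) := by
    have h := integral_identity ht (fun a' z => w a' (ξ z))
      (fun s => deriv (fun t' => w t' (ξ s)) s)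
      (fun s => deriv (fun x' => w s x') (ξ s) * v s (ξ s) (w s (ξ s)))
      (fun s => f s (ξ s) (w s (ξ s)))
      (fun s _ => (hwt s (ξ s)).hasDerivAt)
      (fun s hs => (hwx s (ξ s)).hasDerivAt.comp_hasDerivWithinAt s (hξ s hs))
      (fun s _ => by
        show deriv (fun t' => w t' (ξ s)) s +
            deriv (fun x' => w s x') (ξ s) * v s (ξ s) (w s (ξ s)) = f s (ξ s) (w s (ξ s))
        have hp := hpde s (ξ s)
        have hc : deriv (fun x' => w s x') (ξ s) * v s (ξ s) (w s (ξ s)) =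
            v s (ξ s) (w s (ξ s)) * deriv (fun x' => w s x') (ξ s) := mul_comm _ _
        linarith [hp, hc])
      hgcont hFcont
    exact h
  -- integral identity for ω via FTC
  have hωid : ∀ s ∈ Set.Icc t₀ t₁, ω s = ω t₀ + ∫ u in t₀..s, f u (ξ u) (ω u) := by
    intro s hs
    have hsub : Set.Icc t₀ s ⊆ Set.Icc t₀ t₁ := Set.Icc_subset_Icc le_rfl hs.2
    have hderiv : ∀ u ∈ Set.Ioo t₀ s,
        HasDerivWithinAt ω (f u (ξ u) (ω u)) (Set.Ioi u) u := by
      intro u hu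
      have huI : u ∈ Set.Icc t₀ t₁ := ⟨le_of_lt hu.1, le_trans (le_of_lt hu.2) hs.2⟩
      have hmem : Set.Icc t₀ t₁ ∈ 𝓝[>] u := by
        apply Filter.mem_of_superset
          (Ioc_mem_nhdsGT_of_mem ⟨le_refl u, lt_of_lt_of_le hu.2 hs.2⟩)
        intro z hz
        exact ⟨le_trans huI.1 (le_of_lt hz.1), hz.2⟩
      exact (hω u huI).mono_of_mem_nhdsWithin hmem
    have hint : IntervalIntegrable (fun u => f u (ξ u) (ω u)) MeasureTheory.volume t₀ s := by
      apply ContinuousOn.intervalIntegrable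
      rw [uIcc_of_le hs.1]
      exact hFωcont.mono hsub
    have heq := intervalIntegral.integral_eq_sub_of_hasDeriv_right_of_le hs.1
      (hωcont.mono hsub) hderiv hint
    linarith [heq]
  -- difference satisfies a Grönwall-type integral inequality
  have hintF : ∀ s ∈ Set.Icc t₀ t₁,
      IntervalIntegrable (fun u => f u (ξ u) (w u (ξ u))) MeasureTheory.volume t₀ s := by
    intro s hs
    apply ContinuousOn.intervalIntegrable
    rw [uIcc_of_le hs.1]
    exact hFcont.mono (Set.Icc_subset_Icc le_rfl hs.2)
  have hintFω : ∀ s ∈ Set.Icc t₀ t₁,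
      IntervalIntegrable (fun u => f u (ξ u) (ω u)) MeasureTheory.volume t₀ s := by
    intro s hs
    apply ContinuousOn.intervalIntegrable
    rw [uIcc_of_le hs.1]
    exact hFωcont.mono (Set.Icc_subset_Icc le_rfl hs.2)
  have hdiff : ∀ s ∈ Set.Icc t₀ t₁, w s (ξ s) - ω s =
      ∫ u in t₀..s, (f u (ξ u) (w u (ξ u)) - f u (ξ u) (ω u)) := by
    intro s hs
    rw [intervalIntegral.integral_sub (hintF s hs) (hintFω s hs)]
    have h1 := hgid s hs
    have h2 := hωid s hs
    rw [h1, h2, hinit]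
    ring
  obtain ⟨M, hM⟩ := IsCompact.exists_bound_of_continuousOn isCompact_Icc (hgcont.sub hωcont)
  have hM0 : 0 ≤ M := le_trans (norm_nonneg _) (hM t₀ ⟨le_refl _, ht⟩)
  have iter : ∀ m : ℕ, ∀ s ∈ Set.Icc t₀ t₁,
      |w s (ξ s) - ω s| ≤ M * (K * (s - t₀)) ^ m / m.factorial := by
    intro m
    induction m with
    | zero =>
      intro s hs
      have := hM s hs
      rw [Real.norm_eq_abs] at this
      simpa using this
    | succ m ih =>
      intro s hs
      have hbound : ∀ u ∈ Set.Icc t₀ s,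
          ‖f u (ξ u) (w u (ξ u)) - f u (ξ u) (ω u)‖ ≤
            (M * K ^ (m + 1) / m.factorial) * (u - t₀) ^ m := by
        intro u hu
        have huI : u ∈ Set.Icc t₀ t₁ := ⟨hu.1, le_trans hu.2 hs.2⟩
        have h1 : |f u (ξ u) (w u (ξ u)) - f u (ξ u) (ω u)| ≤ K * |w u (ξ u) - ω u| :=
          hlip u (ξ u) _ _
        have h2 := ih u huI
        have h3 : K * |w u (ξ u) - ω u| ≤ K * (M * (K * (u - t₀)) ^ m / m.factorial) :=
          mul_le_mul_of_nonneg_left h2 hK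
        have h4 : K * (M * (K * (u - t₀)) ^ m / m.factorial) =
            (M * K ^ (m + 1) / m.factorial) * (u - t₀) ^ m := by
          rw [mul_pow]
          ring
        rw [Real.norm_eq_abs]
        linarith
      have hintsub : IntervalIntegrable
          (fun u => ‖f u (ξ u) (w u (ξ u)) - f u (ξ u) (ω u)‖) MeasureTheory.volume t₀ s :=
        ((hintF s hs).sub (hintFω s hs)).norm
      have hintbd : IntervalIntegrable
          (fun u => (M * K ^ (m + 1) / m.factorial) * (u - t₀) ^ m)
          MeasureTheory.volume t₀ s := by
        apply Continuous.intervalIntegrable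
        fun_prop
      have hnorm : ‖∫ u in t₀..s, (f u (ξ u) (w u (ξ u)) - f u (ξ u) (ω u))‖ ≤
          ∫ u in t₀..s, (M * K ^ (m + 1) / m.factorial) * (u - t₀) ^ m := by
        calc ‖∫ u in t₀..s, (f u (ξ u) (w u (ξ u)) - f u (ξ u) (ω u))‖
            ≤ ∫ u in t₀..s, ‖f u (ξ u) (w u (ξ u)) - f u (ξ u) (ω u)‖ :=
              intervalIntegral.norm_integral_le_integral_norm hs.1
          _ ≤ ∫ u in t₀..s, (M * K ^ (m + 1) / m.factorial) * (u - t₀) ^ m :=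
              intervalIntegral.integral_mono_on hs.1 hintsub hintbd hbound
      have hcomp : ∫ u in t₀..s, (M * K ^ (m + 1) / m.factorial) * (u - t₀) ^ m =
          (M * K ^ (m + 1) / m.factorial) * ((s - t₀) ^ (m + 1) / (m + 1)) := by
        rw [intervalIntegral.integral_const_mul]
        congr 1
        have hshift := intervalIntegral.integral_comp_sub_right (a := t₀) (b := s)
          (fun u => u ^ m) t₀
        rw [hshift, sub_self, integral_pow]
        norm_num
      have hfact : (M * K ^ (m + 1) / m.factorial) * ((s - t₀) ^ (m + 1) / (m + 1)) =
          M * (K * (s - t₀)) ^ (m + 1) / (m + 1).factorial := by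
        rw [Nat.factorial_succ, mul_pow]
        have hfne : ((m.factorial : ℝ)) ≠ 0 := Nat.cast_ne_zero.mpr (Nat.factorial_ne_zero m)
        have hm1 : ((m : ℝ) + 1) ≠ 0 := by positivity
        push_cast
        field_simp
      rw [hdiff s hs, ← Real.norm_eq_abs]
      calc ‖∫ u in t₀..s, (f u (ξ u) (w u (ξ u)) - f u (ξ u) (ω u))‖
          ≤ ∫ u in t₀..s, (M * K ^ (m + 1) / m.factorial) * (u - t₀) ^ m := hnorm
        _ = M * (K * (s - t₀)) ^ (m + 1) / (m + 1).factorial := by rw [hcomp, hfact]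
  intro t htmem
  have hlim : Filter.Tendsto (fun m : ℕ => M * (K * (t - t₀)) ^ m / m.factorial)
      Filter.atTop (𝓝 0) := by
    have h1 := FloorSemiring.tendsto_pow_div_factorial_atTop (K := ℝ) (K * (t - t₀))
    have h2 : (fun m : ℕ => M * (K * (t - t₀)) ^ m / m.factorial) =
        fun m : ℕ => M * ((K * (t - t₀)) ^ m / m.factorial) := by
      funext m; ring
    rw [h2]
    simpa using h1.const_mul M
  have hle : |w t (ξ t) - ω t| ≤ 0 :=
    ge_of_tendsto hlim (Filter.Eventually.of_forall fun m => iter m t htmem)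
  have hge := abs_nonneg (w t (ξ t) - ω t)
  have hz : w t (ξ t) - ω t = 0 := abs_eq_zero.mp (le_antisymm hle hge)
  linarith
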